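/- arXiv:2410.00216 — 3 statements merged into one kernel-verified Lean document; each statement's English description precedes it below -/
import Mathlib

section
/- In any Gauss diagram (a set of n chords with distinct endpoints on an oriented circle, each chord oriented from a tail to a head), the sum over all chords e of the index n(e) taken mod 2 equals 0; more precisely, the number of chords with odd index is even. -/
open Finset

/-- A Gauss diagram: `n` oriented chords with `2n` pairwise distinct endpoints
on the oriented circle, modelled as `ZMod (2*n)` with its cyclic order. -/
structure GaussDiagram (n : ℕ) where
  tail : Fin n → ZMod (2 * n)
  head : Fin n → ZMod (2 * n)
  distinct : Function.Injective (Sum.elim tail head)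

/-- `x` lies in the open arc from `a` to `b` (in the circle's orientation). -/
def inArc {n : ℕ} (a b x : ZMod (2 * n)) : Prop :=
  0 < (x - a).val ∧ (x - a).val < (b - a).val

instance {n : ℕ} (a b x : ZMod (2 * n)) : Decidable (inArc a b x) := by
  unfold inArc; infer_instance

/-- The index `n(e)` of a chord: tails minus heads in the open arc `e⁺`
from the tail of `e` to the head of `e`. -/
def chordIndex {n : ℕ} (D : GaussDiagram n) (e : Fin n) : ℤ :=
  ((univ.filter fun f => inArc (D.tail e) (D.head e) (D.tail f)).card : ℤ) -
  ((univ.filter fun f => inArc (D.tail e) (D.head e) (D.head f)).card : ℤ)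

lemma aux_range (n : ℕ) : (∑ k ∈ range (2*n), (k : ZMod 2)) = n := by
  induction n with
  | zero => simp
  | succ m ih =>
    have h : 2 * (m+1) = (2*m) + 1 + 1 := by ring
    rw [h, sum_range_succ, sum_range_succ, ih]
    push_cast
    ring_nf
    rw [show (5 : ZMod 2) = 1 from rfl, mul_one]

lemma int_cast_zmod2 (m : ℤ) : ((m : ZMod 2)) = if Odd m then 1 else 0 := by
  rcases Int.even_or_odd m with h | h
  · rw [if_neg (by simpa [Int.not_odd_iff_even] using h)]
    obtain ⟨k, hk⟩ := h
    subst hk; push_cast; ring_nf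
    rw [show (2 : ZMod 2) = 0 from rfl]; ring
  · rw [if_pos h]
    obtain ⟨k, hk⟩ := h
    subst hk; push_cast; ring_nf
    rw [show (2 : ZMod 2) = 0 from rfl]; ring

section main
variable {n : ℕ} [NeZero (2*n)] (D : GaussDiagram n)

lemma tail_inj : Function.Injective D.tail := fun a b h => by
  have := D.distinct (a₁ := Sum.inl a) (a₂ := Sum.inl b) (by simpa using h)
  simpa using this

lemma head_inj : Function.Injective D.head := fun a b h => by
  have := D.distinct (a₁ := Sum.inr a) (a₂ := Sum.inr b) (by simpa using h)
  simpa using this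

lemma tail_ne_head (a b : Fin n) : D.tail a ≠ D.head b := fun h => by
  have := D.distinct (a₁ := Sum.inl a) (a₂ := Sum.inr b) (by simpa using h)
  simp at this

lemma images_disjoint : Disjoint (univ.image D.tail) (univ.image D.head) := by
  rw [Finset.disjoint_left]
  rintro x hx hy
  simp only [mem_image, mem_univ, true_and] at hx hy
  obtain ⟨a, ha⟩ := hx
  obtain ⟨b, hb⟩ := hy
  exact tail_ne_head D a b (ha.trans hb.symm)

lemma images_union :
    (univ.image D.tail) ∪ (univ.image D.head) = (univ : Finset (ZMod (2*n))) := by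
  apply Finset.eq_univ_of_card
  rw [card_union_of_disjoint (images_disjoint D),
    card_image_of_injective _ (tail_inj D), card_image_of_injective _ (head_inj D)]
  simp [ZMod.card]
  omega

lemma count_split (P : ZMod (2*n) → Prop) [DecidablePred P] :
    (univ.filter fun f => P (D.tail f)).card + (univ.filter fun f => P (D.head f)).card
      = (univ.filter P).card := by
  have h1 : (univ.filter P) = ((univ.image D.tail).filter P) ∪ ((univ.image D.head).filter P) := by
    rw [← filter_union, images_union D]
  rw [h1, card_union_of_disjoint (disjoint_filter_filter (images_disjoint D)),
    Finset.filter_image, Finset.filter_image,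
    card_image_of_injective _ (tail_inj D), card_image_of_injective _ (head_inj D)]

lemma arc_card (a b : ZMod (2*n)) :
    (univ.filter (inArc a b)).card = (b - a).val - 1 := by
  rw [show (b-a).val - 1 = (Finset.Ico 1 (b-a).val).card by rw [Nat.card_Ico]]
  apply Finset.card_bij (fun x _ => (x - a).val)
  · intro x hx
    simp only [mem_filter, mem_univ, true_and] at hx
    simp only [Finset.mem_Ico]
    exact ⟨hx.1, hx.2⟩
  · intro x _ y _ h
    have := ZMod.val_injective _ h
    exact sub_left_injective this
  · intro k hk
    simp only [Finset.mem_Ico] at hk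
    have hlt : k < 2*n := lt_trans hk.2 (ZMod.val_lt _)
    refine ⟨(k : ZMod (2*n)) + a, ?_, ?_⟩
    · simp only [mem_filter, mem_univ, true_and, inArc, add_sub_cancel_right]
      rw [ZMod.val_cast_of_lt hlt]
      exact ⟨hk.1, hk.2⟩
    · rw [add_sub_cancel_right, ZMod.val_cast_of_lt hlt]

lemma val_parity (a b : ZMod (2*n)) :
    (((a - b).val : ℕ) : ZMod 2) = ((a.val : ℕ) : ZMod 2) + ((b.val : ℕ) : ZMod 2) := by
  have h2 : (2 : ℕ) ∣ 2*n := ⟨n, rfl⟩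
  have key : ∀ x : ZMod (2*n), ((x.val : ℕ) : ZMod 2) = ZMod.castHom h2 (ZMod 2) x := by
    intro x
    rw [ZMod.castHom_apply, ← ZMod.natCast_val]
  rw [key, key, key, map_sub, CharTwo.sub_eq_add]

lemma chord_parity (e : Fin n) :
    ((chordIndex D e : ℤ) : ZMod 2)
      = ((D.head e).val : ZMod 2) + ((D.tail e).val : ZMod 2) + 1 := by
  have hne : D.tail e ≠ D.head e := tail_ne_head D e e
  have hd1 : 1 ≤ (D.head e - D.tail e).val := by
    rw [Nat.one_le_iff_ne_zero, ← Nat.pos_iff_ne_zero, ZMod.val_pos]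
    exact sub_ne_zero.mpr (Ne.symm hne)
  have hsplit := count_split D (inArc (D.tail e) (D.head e))
  rw [arc_card] at hsplit
  unfold chordIndex
  push_cast
  rw [CharTwo.sub_eq_add, ← Nat.cast_add, hsplit, ← val_parity (D.head e) (D.tail e)]
  obtain ⟨m, hm⟩ : ∃ m, (D.head e - D.tail e).val = m + 1 := ⟨(D.head e - D.tail e).val - 1, by omega⟩
  rw [hm]
  simp only [Nat.add_sub_cancel]
  push_cast
  rw [add_assoc, show (1 : ZMod 2) + 1 = 0 from rfl, add_zero]

lemma sum_vals :
    (∑ e : Fin n, (((D.head e).val : ZMod 2) + ((D.tail e).val : ZMod 2))) = (n : ZMod 2) := by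
  have hbij : Function.Bijective (Sum.elim D.tail D.head) := by
    rw [Fintype.bijective_iff_injective_and_card]
    exact ⟨D.distinct, by simp [ZMod.card]; ring⟩
  have h1 : (∑ x : ZMod (2*n), ((x.val : ℕ) : ZMod 2))
      = ∑ g : Fin n ⊕ Fin n, (((Sum.elim D.tail D.head g).val : ℕ) : ZMod 2) :=
    (Fintype.sum_bijective _ hbij _ _ (fun g => rfl)).symm
  rw [Fintype.sum_sum_type] at h1
  simp only [Sum.elim_inl, Sum.elim_inr] at h1
  have h2 : (∑ x : ZMod (2*n), ((x.val : ℕ) : ZMod 2)) = ∑ k ∈ range (2*n), (k : ZMod 2) := by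
    refine Finset.sum_nbij' (fun x => x.val) (fun k => (k : ZMod (2*n))) ?_ ?_ ?_ ?_ ?_
    · intro x _; simp [ZMod.val_lt]
    · intro k _; simp
    · intro x _; simp [ZMod.natCast_val, ZMod.cast_id]
    · intro k hk; simp only [Finset.mem_range] at hk; exact ZMod.val_cast_of_lt hk
    · intro x _; rfl
  rw [h2, aux_range] at h1
  rw [Finset.sum_add_distrib, add_comm]
  exact h1.symm

end main

open scoped Classical in
/-- the sum of all chord indices is 0 mod 2; more precisely, the
number of chords of odd index is even. -/
theorem stmt2 (n : ℕ) (D : GaussDiagram n) :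
    (∑ e, chordIndex D e) % 2 = 0 ∧
      Even (univ.filter fun e => Odd (chordIndex D e)).card := by
  rcases Nat.eq_zero_or_pos n with hn | hn
  · subst hn; simp
  haveI : NeZero (2*n) := ⟨by omega⟩
  have key : ((∑ e, chordIndex D e : ℤ) : ZMod 2) = 0 := by
    push_cast
    rw [show (∑ e, ((chordIndex D e : ℤ) : ZMod 2))
        = ∑ e : Fin n, ((((D.head e).val : ZMod 2) + ((D.tail e).val : ZMod 2)) + 1) from
      Finset.sum_congr rfl fun e _ => chord_parity D e]
    rw [Finset.sum_add_distrib, sum_vals D]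
    simp [CharTwo.add_self_eq_zero]
  have hdvd : (2 : ℤ) ∣ ∑ e, chordIndex D e := by
    have := (ZMod.intCast_zmod_eq_zero_iff_dvd (∑ e, chordIndex D e) 2).mp key
    exact_mod_cast this
  constructor
  · omega
  · -- count of odd chords
    have hcard : (((univ.filter fun e => Odd (chordIndex D e)).card : ℕ) : ZMod 2) = 0 := by
      have : ((∑ e, chordIndex D e : ℤ) : ZMod 2)
          = ∑ e, ((chordIndex D e : ℤ) : ZMod 2) := by push_cast; rfl
      rw [this] at key
      have : (∑ e, ((chordIndex D e : ℤ) : ZMod 2))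
          = ∑ e, (if Odd (chordIndex D e) then (1 : ZMod 2) else 0) :=
        Finset.sum_congr rfl fun e _ => int_cast_zmod2 _
      rw [this, Finset.sum_boole] at key
      exact key
    rw [ZMod.natCast_eq_zero_iff] at hcard
    exact (even_iff_two_dvd).mpr hcard
end

section
/- If every chord of a Gauss diagram D has even index, and D' is obtained from D by reversing the orientation of one chord, then every chord of D' has even index. Hence checkerboard colorability (all chord indices even) is preserved under free-equivalence of Gauss diagrams. -/
open Finset

/-- `D'` is obtained from `D` by reversing the orientation of the single chord `e`. -/
def ReverseAt {n : ℕ} (D D' : GaussDiagram n) (e : Fin n) : Prop :=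
  D'.tail e = D.head e ∧ D'.head e = D.tail e ∧
    ∀ f : Fin n, f ≠ e → D'.tail f = D.tail f ∧ D'.head f = D.head f

lemma inArc_irrefl_left {n : ℕ} (a b : ZMod (2 * n)) : ¬ inArc a b a := by
  simp [inArc]

lemma inArc_irrefl_right {n : ℕ} (a b : ZMod (2 * n)) : ¬ inArc a b b := by
  simp [inArc]

lemma arc_flip {n : ℕ} [NeZero (2 * n)] {a b x : ZMod (2 * n)}
    (hab : b ≠ a) (hxa : x ≠ a) (hxb : x ≠ b) :
    inArc b a x ↔ ¬ inArc a b x := by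
  have hm : 0 < 2 * n := Nat.pos_of_ne_zero (NeZero.ne _)
  have hu0 : (x - a).val ≠ 0 := by
    simp [ZMod.val_eq_zero, sub_eq_zero, hxa]
  have hv0 : (b - a).val ≠ 0 := by
    simp [ZMod.val_eq_zero, sub_eq_zero, hab]
  have huv : (x - a).val ≠ (b - a).val := by
    intro h
    exact hxb (by have := ZMod.val_injective _ h; exact sub_left_injective this)
  have hul : (x - a).val < 2 * n := ZMod.val_lt _
  have hvl : (b - a).val < 2 * n := ZMod.val_lt _
  have hs : (a - b).val = 2 * n - (b - a).val := by
    rw [show a - b = -(b - a) by ring, ZMod.neg_val]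
    simp [sub_eq_zero, hab]
  have hw : (x - b).val = ((x - a).val + (a - b).val) % (2 * n) := by
    rw [show x - b = (x - a) + (a - b) by ring, ZMod.val_add]
  rw [hs] at hw
  unfold inArc
  rcases lt_or_ge (x - a).val (b - a).val with h | h
  · have hlt : (x - a).val + (2 * n - (b - a).val) < 2 * n := by omega
    rw [Nat.mod_eq_of_lt hlt] at hw
    constructor
    · intro ⟨h1, h2⟩; omega
    · intro _; omega
  · have heq : (x - a).val + (2 * n - (b - a).val) = ((x - a).val - (b - a).val) + 2 * n := by
      omega
    rw [heq, Nat.add_mod_right, Nat.mod_eq_of_lt (by omega)] at hw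
    constructor
    · intro _ hc; omega
    · intro _; constructor <;> omega

/-- if every chord of `D` has even index and `D'` is obtained from
`D` by reversing one chord, then every chord of `D'` has even index
(checkerboard colorability is preserved under free-equivalence). -/
theorem stmt4 (n : ℕ) (D D' : GaussDiagram n) (e : Fin n)
    (hrev : ReverseAt D D' e)
    (heven : ∀ f : Fin n, Even (chordIndex D f)) :
    ∀ f : Fin n, Even (chordIndex D' f) := by
  have hn : 0 < n := e.pos
  haveI : NeZero (2 * n) := ⟨by omega⟩
  obtain ⟨hte, hhe, hoth⟩ := hrev
  -- parity reformulation
  have parity : ∀ (E : GaussDiagram n) (g : Fin n),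
      Even (chordIndex E g) ↔
      Even (∑ f : Fin n, ((if inArc (E.tail g) (E.head g) (E.tail f) then 1 else 0)
          + (if inArc (E.tail g) (E.head g) (E.head f) then 1 else 0))) := by
    intro E g
    unfold chordIndex
    rw [Int.even_sub, Finset.sum_add_distrib, Nat.even_add,
      Finset.card_filter, Finset.card_filter]
    simp [Int.even_coe_nat]
  -- injectivity helpers
  have hdist : ∀ (g h : Fin n), g ≠ h → D.tail g ≠ D.tail h := by
    intro g h hgh hEq
    exact hgh (Sum.inl_injective (D.distinct (show Sum.elim D.tail D.head (Sum.inl g) = Sum.elim D.tail D.head (Sum.inl h) from hEq)))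
  have hdistTH : ∀ (g h : Fin n), D.tail g ≠ D.head h := by
    intro g h hEq
    have := D.distinct (show Sum.elim D.tail D.head (Sum.inl g) = Sum.elim D.tail D.head (Sum.inr h) from hEq)
    simp at this
  have hdistH : ∀ (g h : Fin n), g ≠ h → D.head g ≠ D.head h := by
    intro g h hgh hEq
    exact hgh (Sum.inr_injective (D.distinct (show Sum.elim D.tail D.head (Sum.inr g) = Sum.elim D.tail D.head (Sum.inr h) from hEq)))
  intro f
  rw [parity]
  by_cases hfe : f = e
  · -- f = e : the arc is reversed
    subst hfe
    rw [hte, hhe]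
    set a := D.tail f with ha
    set b := D.head f with hb
    have hab : b ≠ a := fun h => hdistTH f f h.symm
    have key : (∑ g : Fin n, ((if inArc b a (D'.tail g) then 1 else 0)
          + (if inArc b a (D'.head g) then 1 else 0)))
        + (∑ g : Fin n, ((if inArc a b (D.tail g) then 1 else 0)
          + (if inArc a b (D.head g) then 1 else 0)))
        = ∑ g : Fin n, (if g = f then 0 else 2) := by
      rw [← Finset.sum_add_distrib]
      apply Finset.sum_congr rfl
      intro g _
      by_cases hgf : g = f
      · subst hgf
        rw [hte, hhe]
        simp [inArc_irrefl_left, inArc_irrefl_right]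
        exact ⟨inArc_irrefl_left a b, inArc_irrefl_right a b⟩
      · obtain ⟨h1, h2⟩ := hoth g hgf
        rw [h1, h2, if_neg hgf]
        have ht1 : D.tail g ≠ a := hdist g f hgf
        have ht2 : D.tail g ≠ b := hdistTH g f
        have hh1 : D.head g ≠ a := fun h => hdistTH f g h.symm
        have hh2 : D.head g ≠ b := fun h => hdistH g f hgf h
        have f1 := arc_flip hab ht1 ht2
        have f2 := arc_flip hab hh1 hh2
        by_cases c1 : inArc a b (D.tail g) <;> by_cases c2 : inArc a b (D.head g) <;>
          simp [c1, c2, f1, f2]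
    have hevenRHS : Even (∑ g : Fin n, (if g = f then 0 else 2)) := by
      apply Finset.even_sum
      intro g _
      split <;> simp
    rw [← key, Nat.even_add] at hevenRHS
    have hD := (parity D f).mp (heven f)
    exact hevenRHS.mpr hD
  · -- f ≠ e : the arc and all endpoint sets are unchanged up to swapping chord e
    obtain ⟨hf1, hf2⟩ := hoth f hfe
    rw [hf1, hf2]
    have key : (∑ g : Fin n, ((if inArc (D.tail f) (D.head f) (D'.tail g) then 1 else 0)
          + (if inArc (D.tail f) (D.head f) (D'.head g) then 1 else 0)))
        = ∑ g : Fin n, ((if inArc (D.tail f) (D.head f) (D.tail g) then 1 else 0)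
          + (if inArc (D.tail f) (D.head f) (D.head g) then 1 else 0)) := by
      rw [← Finset.sum_erase_add _ _ (mem_univ e), ← Finset.sum_erase_add _ _ (mem_univ e)]
      congr 1
      · apply Finset.sum_congr rfl
        intro g hg
        obtain ⟨h1, h2⟩ := hoth g (Finset.ne_of_mem_erase hg)
        rw [h1, h2]
      · rw [hte, hhe, add_comm]
    rw [key]
    exact (parity D f).mp (heven f)
end

section
/- Let D be a flat knot diagram on a closed surface Σ, and for each state S of the skein resolution let k(S) = dim ker(i_* : H₁(S; ℤ/2) → H₁(Σ; ℤ/2)) and r(S) = dim im(i_*). If the ℤ/2-homology class of the diagram's underlying curve is zero in H₁(Σ; ℤ/2), then k(S) ≥ 1 for every state S; if the class is nonzero, then r(S) ≥ 1 for every state S. Consequently, in the first case 2 divides J_D(z) = (−1)^{cr(D)} Σ_S (−2)^{k(S)} z^{r(S)}, and in the second case z divides J_D(z). -/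
open Finset

/-- abstract form of the divisibility of the flat Jones–Krushkal
polynomial.  States are the `2^n` smoothings; state `S` consists of `L S` loops
with `ℤ/2`-homology classes `c S i` in `V = H₁(Σ; ℤ/2)`, summing to the class
`ω` of the diagram's curve.  With `r S` the rank of the image (span of the loop
classes) and `k S = L S − r S` the kernel dimension: if `ω = 0` then `k S ≥ 1`
for all states and `2 ∣ J_D`, while if `ω ≠ 0` then `r S ≥ 1` for all states
and `z ∣ J_D`, where `J_D = (−1)^n ∑_S (−2)^{k S} z^{r S}`. -/
theorem stmt10 (n : ℕ) (V : Type*) [AddCommGroup V] [Module (ZMod 2) V]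
    [FiniteDimensional (ZMod 2) V]
    (L : (Fin n → Bool) → ℕ) (hL : ∀ S, 1 ≤ L S)
    (c : (S : Fin n → Bool) → Fin (L S) → V) (ω : V)
    (hsum : ∀ S, ∑ i, c S i = ω) :
    (ω = 0 →
      (∀ S, 1 ≤ L S - Module.finrank (ZMod 2)
        (Submodule.span (ZMod 2) (Set.range (c S)))) ∧
      (2 : Polynomial ℤ) ∣ (-1 : Polynomial ℤ) ^ n *
        ∑ S : Fin n → Bool, (-2 : Polynomial ℤ) ^
            (L S - Module.finrank (ZMod 2) (Submodule.span (ZMod 2) (Set.range (c S)))) *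
          Polynomial.X ^ Module.finrank (ZMod 2) (Submodule.span (ZMod 2) (Set.range (c S)))) ∧
    (ω ≠ 0 →
      (∀ S, 1 ≤ Module.finrank (ZMod 2) (Submodule.span (ZMod 2) (Set.range (c S)))) ∧
      Polynomial.X ∣ (-1 : Polynomial ℤ) ^ n *
        ∑ S : Fin n → Bool, (-2 : Polynomial ℤ) ^
            (L S - Module.finrank (ZMod 2) (Submodule.span (ZMod 2) (Set.range (c S)))) *
          Polynomial.X ^ Module.finrank (ZMod 2) (Submodule.span (ZMod 2) (Set.range (c S)))) := by
  have key0 : ω = 0 → ∀ S, Module.finrank (ZMod 2)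
      (Submodule.span (ZMod 2) (Set.range (c S))) < L S := by
    intro h0 S
    rcases lt_or_eq_of_le ((finrank_range_le_card (R := ZMod 2) (c S)).trans_eq
      (Fintype.card_fin _)) with h | h
    · exact h
    · exfalso
      have hli : LinearIndependent (ZMod 2) (c S) := by
        rw [linearIndependent_iff_card_eq_finrank_span]
        simpa [Set.finrank] using h.symm
      have := (Fintype.linearIndependent_iff.mp hli) (fun _ => 1)
        (by simpa [h0] using hsum S) ⟨0, hL S⟩
      exact one_ne_zero this
  have keyr : ω ≠ 0 → ∀ S, 1 ≤ Module.finrank (ZMod 2)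
      (Submodule.span (ZMod 2) (Set.range (c S))) := by
    intro hne S
    have hex : ∃ i, c S i ≠ 0 := by
      by_contra h
      push_neg at h
      exact hne (by rw [← hsum S]; simp [h])
    obtain ⟨i, hi⟩ := hex
    have hmem : c S i ∈ Submodule.span (ZMod 2) (Set.range (c S)) :=
      Submodule.subset_span ⟨i, rfl⟩
    by_contra h
    push_neg at h
    interval_cases hh : Module.finrank (ZMod 2) (Submodule.span (ZMod 2) (Set.range (c S)))
    rw [Submodule.finrank_eq_zero.mp hh, Submodule.mem_bot] at hmem
    exact hi hmem
  refine ⟨fun h0 => ⟨fun S => (by have := key0 h0 S; omega), ?_⟩,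
    fun hne => ⟨keyr hne, ?_⟩⟩
  · refine Dvd.dvd.mul_left (Finset.dvd_sum fun S _ => Dvd.dvd.mul_right ?_ _) _
    calc (2 : Polynomial ℤ) ∣ (-2) ^ 1 := by norm_num
    _ ∣ (-2) ^ (L S - Module.finrank (ZMod 2)
        (Submodule.span (ZMod 2) (Set.range (c S)))) :=
      pow_dvd_pow _ ((by have := key0 h0 S; omega))
  · refine Dvd.dvd.mul_left (Finset.dvd_sum fun S _ => Dvd.dvd.mul_left ?_ _) _
    calc (Polynomial.X : Polynomial ℤ) ∣ Polynomial.X ^ 1 := by simp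
    _ ∣ _ := pow_dvd_pow _ (keyr hne S)
end
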